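/- Let x_1,…,x_n be positive integers with x_1+⋯+x_n = 2N. The partition constraint graph P(x) has a legal configuration if and only if there exists a subset S ⊆ {1,…,n} with ∑_{i∈S} x_i = N. -/

import Mathlib

/-!
STATEMENT 0: Let x_1,…,x_n be positive integers with x_1+⋯+x_n = 2N.
The partition constraint graph P(x) has a legal configuration if and only if
there exists a subset S ⊆ {1,…,n} with ∑_{i∈S} x_i = N.
-/

/-- A configuration of a constraint graph assigns to each edge one of its
two endpoints (its head). -/
def IsConf {V : Type} (G : SimpleGraph V) (C : Sym2 V → V) : Prop :=
  ∀ e ∈ G.edgeSet, C e ∈ e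

/-- A configuration is legal if every vertex receives inflow (total weight of
edges whose head is that vertex) at least its minimum inflow. -/
def Legal {V : Type} [Fintype V] [DecidableEq V] (G : SimpleGraph V)
    [DecidableRel G.Adj] (w : Sym2 V → ℕ) (μ : V → ℕ) (C : Sym2 V → V) : Prop :=
  ∀ v : V, μ v ≤ ∑ e ∈ G.edgeFinset, if C e = v then w e else 0

/-- Vertices of the partition constraint graph: `U`, `W` and `v i` for `i < n`. -/
inductive PVert (n : ℕ) : Type
  | U : PVert n
  | W : PVert n
  | v : Fin n → PVert n
deriving DecidableEq, Fintype

/-- Adjacency of the partition constraint graph: `U` and `W` are each joined to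
every `v i`. -/
def padjB {n : ℕ} : PVert n → PVert n → Bool
  | .U, .v _ => true
  | .v _, .U => true
  | .W, .v _ => true
  | .v _, .W => true
  | _, _ => false

/-- The underlying graph of the partition constraint graph `P(x)`. -/
def PGraph (n : ℕ) : SimpleGraph (PVert n) where
  Adj a b := padjB a b
  symm := ⟨by intro a b h; cases a <;> cases b <;> simp_all [padjB]⟩
  loopless := ⟨by intro a; cases a <;> simp [padjB]⟩

instance (n : ℕ) : DecidableRel (PGraph n).Adj :=
  fun a b => inferInstanceAs (Decidable (padjB a b = true))

/-- Edge weights of `P(x)` as a symmetric pair function: the edges `{U, v i}`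
and `{W, v i}` both have weight `x i`. -/
def wPairP {n : ℕ} (x : Fin n → ℕ) : PVert n → PVert n → ℕ
  | .U, .v i => x i
  | .v i, .U => x i
  | .W, .v i => x i
  | .v i, .W => x i
  | _, _ => 0

/-- Edge weights of `P(x)`. -/
def wP {n : ℕ} (x : Fin n → ℕ) : Sym2 (PVert n) → ℕ :=
  Sym2.lift ⟨wPairP x, by intro a b; cases a <;> cases b <;> rfl⟩

/-- Minimum inflows of `P(x)`: `μ(U) = μ(W) = N` and `μ(v i) = x i`. -/
def μP {n : ℕ} (x : Fin n → ℕ) (N : ℕ) : PVert n → ℕ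
  | .U => N
  | .W => N
  | .v i => x i

open Finset in
lemma edgeFinset_P (n : ℕ) : (PGraph n).edgeFinset =
    (Finset.univ.image fun i : Fin n => s(PVert.U, PVert.v i)) ∪
    (Finset.univ.image fun i : Fin n => s(PVert.W, PVert.v i)) := by
  ext e
  induction e with
  | _ a b =>
    rw [SimpleGraph.mem_edgeFinset]
    cases a <;> cases b <;>
      simp [SimpleGraph.mem_edgeFinset, SimpleGraph.mem_edgeSet, PGraph, padjB, Sym2.eq_iff]

lemma sum_edge (n : ℕ) (f : Sym2 (PVert n) → ℕ) :
    ∑ e ∈ (PGraph n).edgeFinset, f e =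
      ∑ i, f s(PVert.U, PVert.v i) + ∑ i, f s(PVert.W, PVert.v i) := by
  rw [edgeFinset_P, Finset.sum_union, Finset.sum_image, Finset.sum_image]
  · intro i _ j _ h; simpa [Sym2.eq_iff] using h
  · intro i _ j _ h; simpa [Sym2.eq_iff] using h
  · rw [Finset.disjoint_left]
    intro e he he'
    simp only [Finset.mem_image, Finset.mem_univ, true_and] at he he'
    obtain ⟨i, rfl⟩ := he
    obtain ⟨j, hj⟩ := he'
    simp [Sym2.eq_iff] at hj
lemma wP_U {n : ℕ} (x : Fin n → ℕ) (i : Fin n) : wP x s(PVert.U, PVert.v i) = x i := rfl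
lemma wP_W {n : ℕ} (x : Fin n → ℕ) (i : Fin n) : wP x s(PVert.W, PVert.v i) = x i := rfl

/-- Pair form of the canonical configuration attached to a subset `S`. -/
def cPair {n : ℕ} (S : Finset (Fin n)) : PVert n → PVert n → PVert n
  | .U, .v i => if i ∈ S then .U else .v i
  | .v i, .U => if i ∈ S then .U else .v i
  | .W, .v i => if i ∈ S then .v i else .W
  | .v i, .W => if i ∈ S then .v i else .W
  | _, _ => .U

/-- The canonical configuration attached to a subset `S`. -/
def cConf {n : ℕ} (S : Finset (Fin n)) : Sym2 (PVert n) → PVert n :=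
  Sym2.lift ⟨cPair S, by intro a b; cases a <;> cases b <;> rfl⟩

theorem stmt0 (n N : ℕ) (x : Fin n → ℕ) (hpos : ∀ i, 0 < x i)
    (hsum : ∑ i, x i = 2 * N) :
    (∃ C : Sym2 (PVert n) → PVert n,
        IsConf (PGraph n) C ∧ Legal (PGraph n) (wP x) (μP x N) C) ↔
      ∃ S : Finset (Fin n), ∑ i ∈ S, x i = N := by
  constructor
  · rintro ⟨C, hC, hL⟩
    have hCU : ∀ i, C s(PVert.U, PVert.v i) = PVert.U ∨ C s(PVert.U, PVert.v i) = PVert.v i := by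
      intro i
      have := hC s(PVert.U, PVert.v i) (by simp [SimpleGraph.mem_edgeSet, PGraph, padjB])
      simpa [Sym2.mem_iff] using this
    have hCW : ∀ i, C s(PVert.W, PVert.v i) = PVert.W ∨ C s(PVert.W, PVert.v i) = PVert.v i := by
      intro i
      have := hC s(PVert.W, PVert.v i) (by simp [SimpleGraph.mem_edgeSet, PGraph, padjB])
      simpa [Sym2.mem_iff] using this
    set A := ∑ i, if C s(PVert.U, PVert.v i) = PVert.U then x i else 0 with hA
    set B := ∑ i, if C s(PVert.W, PVert.v i) = PVert.W then x i else 0 with hB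
    have hAN : N ≤ A := by
      have h := hL PVert.U
      rw [sum_edge n (fun e => if C e = PVert.U then wP x e else 0)] at h
      have h2 : ∑ i, (if C s(PVert.W, PVert.v i) = PVert.U then wP x s(PVert.W, PVert.v i) else 0)
          = 0 := Finset.sum_eq_zero (fun i _ => by rcases hCW i with h | h <;> simp [h])
      simpa [h2, wP_U, μP, hA] using h
    have hBN : N ≤ B := by
      have h := hL PVert.W
      rw [sum_edge n (fun e => if C e = PVert.W then wP x e else 0)] at h
      have h2 : ∑ i, (if C s(PVert.U, PVert.v i) = PVert.W then wP x s(PVert.U, PVert.v i) else 0)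
          = 0 := Finset.sum_eq_zero (fun i _ => by rcases hCU i with h | h <;> simp [h])
      simpa [h2, wP_W, μP, hB] using h
    have hvj : ∀ j, x j ≤ (if C s(PVert.U, PVert.v j) = PVert.v j then x j else 0) +
        (if C s(PVert.W, PVert.v j) = PVert.v j then x j else 0) := by
      intro j
      have h := hL (PVert.v j)
      rw [sum_edge n (fun e => if C e = PVert.v j then wP x e else 0)] at h
      have h1 : ∑ i, (if C s(PVert.U, PVert.v i) = PVert.v j then wP x s(PVert.U, PVert.v i) else 0)
          = if C s(PVert.U, PVert.v j) = PVert.v j then x j else 0 := by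
        rw [Finset.sum_eq_single_of_mem j (Finset.mem_univ j)]
        · simp [wP_U]
        · intro i _ hij; rcases hCU i with h | h <;> simp [h, hij]
      have h2 : ∑ i, (if C s(PVert.W, PVert.v i) = PVert.v j then wP x s(PVert.W, PVert.v i) else 0)
          = if C s(PVert.W, PVert.v j) = PVert.v j then x j else 0 := by
        rw [Finset.sum_eq_single_of_mem j (Finset.mem_univ j)]
        · simp [wP_W]
        · intro i _ hij; rcases hCW i with h | h <;> simp [h, hij]
      simpa [h1, h2, μP] using h
    have hab : ∀ i, (if C s(PVert.U, PVert.v i) = PVert.U then x i else 0) +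
        (if C s(PVert.W, PVert.v i) = PVert.W then x i else 0) ≤ x i := by
      intro i
      by_cases h1 : C s(PVert.U, PVert.v i) = PVert.U <;>
        by_cases h2 : C s(PVert.W, PVert.v i) = PVert.W <;> simp [h1, h2]
      exfalso
      have := hvj i
      rw [if_neg (by rw [h1]; simp), if_neg (by rw [h2]; simp)] at this
      exact absurd this (by simpa using (hpos i).ne')
    have hABsum : A + B ≤ 2 * N := by
      rw [hA, hB, ← Finset.sum_add_distrib, ← hsum]
      exact Finset.sum_le_sum (fun i _ => hab i)
    have hAeq : A = N := by omega
    refine ⟨Finset.univ.filter (fun i => C s(PVert.U, PVert.v i) = PVert.U), ?_⟩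
    rw [Finset.sum_filter]
    exact hAeq
  · rintro ⟨S, hS⟩
    refine ⟨cConf S, ?_, ?_⟩
    · intro e he
      induction e with
      | _ a b =>
        cases a <;> cases b <;>
          simp only [SimpleGraph.mem_edgeSet, PGraph, padjB, Bool.false_eq_true] at he
        all_goals
          simp only [cConf, Sym2.lift_mk, cPair]
          split <;> simp
    · intro v
      cases v with
      | U =>
        rw [sum_edge n (fun e => if cConf S e = PVert.U then wP x e else 0)]
        have h1 : ∑ i, (if cConf S s(PVert.U, PVert.v i) = PVert.U
            then wP x s(PVert.U, PVert.v i) else 0) = ∑ i ∈ S, x i := by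
          have e1 : ∀ i, (if cConf S s(PVert.U, PVert.v i) = PVert.U
              then wP x s(PVert.U, PVert.v i) else 0) = if i ∈ S then x i else 0 := by
            intro i
            simp only [cConf, Sym2.lift_mk, cPair, wP_U]
            split <;> simp
          rw [Finset.sum_congr rfl fun i _ => e1 i, Finset.sum_ite_mem, Finset.univ_inter]
        have h2 : ∑ i, (if cConf S s(PVert.W, PVert.v i) = PVert.U
            then wP x s(PVert.W, PVert.v i) else 0) = 0 := by
          refine Finset.sum_eq_zero fun i _ => ?_
          simp only [cConf, Sym2.lift_mk, cPair]
          split <;> simp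
        rw [h1, h2, hS, μP]
        omega
      | W =>
        rw [sum_edge n (fun e => if cConf S e = PVert.W then wP x e else 0)]
        have h1 : ∑ i, (if cConf S s(PVert.U, PVert.v i) = PVert.W
            then wP x s(PVert.U, PVert.v i) else 0) = 0 := by
          refine Finset.sum_eq_zero fun i _ => ?_
          simp only [cConf, Sym2.lift_mk, cPair]
          split <;> simp
        have h2 : ∑ i, (if cConf S s(PVert.W, PVert.v i) = PVert.W
            then wP x s(PVert.W, PVert.v i) else 0) = ∑ i, (if i ∈ S then 0 else x i) := by
          refine Finset.sum_congr rfl fun i _ => ?_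
          simp only [cConf, Sym2.lift_mk, cPair, wP_W]
          split <;> simp
        have h3 : ∑ i ∈ S, x i + ∑ i, (if i ∈ S then 0 else x i) = ∑ i, x i := by
          rw [← Finset.univ_inter S, ← Finset.sum_ite_mem, ← Finset.sum_add_distrib]
          refine Finset.sum_congr rfl fun i _ => ?_
          by_cases h : i ∈ S <;> simp [h]
        rw [h1, h2, μP]
        omega
      | v j =>
        rw [sum_edge n (fun e => if cConf S e = PVert.v j then wP x e else 0)]
        have h1 : ∑ i, (if cConf S s(PVert.U, PVert.v i) = PVert.v j
            then wP x s(PVert.U, PVert.v i) else 0) = if j ∈ S then 0 else x j := by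
          rw [Finset.sum_eq_single_of_mem j (Finset.mem_univ j)]
          · simp only [cConf, Sym2.lift_mk, cPair, wP_U]
            split <;> simp
          · intro i _ hij
            simp only [cConf, Sym2.lift_mk, cPair]
            split <;> simp [hij]
        have h2 : ∑ i, (if cConf S s(PVert.W, PVert.v i) = PVert.v j
            then wP x s(PVert.W, PVert.v i) else 0) = if j ∈ S then x j else 0 := by
          rw [Finset.sum_eq_single_of_mem j (Finset.mem_univ j)]
          · simp only [cConf, Sym2.lift_mk, cPair, wP_W]
            split <;> simp
          · intro i _ hij
            simp only [cConf, Sym2.lift_mk, cPair]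
            split <;> simp [hij]
        rw [h1, h2, μP]
        split <;> simp
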